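/- Consider the ruled surface X(s,t) = α(s) + t β(s) with β(s) = (cos s, sin s, 0) and α(s) = a(s) β'(s) + b(s) β(s)×β'(s), where a(s) = c₁ cos s (c₁ ≠ 0) and b(s) = b₁ s + b₀ (b₁ ≠ 0). Then the determinants h₁₁ = det(X_s, X_t, X_ss), h₁₂ = det(X_s, X_t, X_st), h₂₂ = det(X_s, X_t, X_tt) satisfy h₁₁ = b₁(a'' − a) and the mean curvature numerator g₂₂ h₁₁ − 2 g₁₂ h₁₂ + g₁₁ h₂₂ vanishes identically, i.e. X is a minimal surface (the helicoid case). -/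

import Mathlib

open Matrix

/-- The helicoid case: for β the horizontal equator, a = c₁ cos s, b = b₁ s + b₀,
    X(s,t) = α(s) + tβ(s) with α = a β' + b β×β', one has h₁₁ = b₁(a'' − a) and
    g₂₂ h₁₁ − 2 g₁₂ h₁₂ + g₁₁ h₂₂ = 0 (a minimal surface). -/
theorem stmt_11 (c₁ b₁ b₀ : ℝ) (hc₁ : c₁ ≠ 0) (hb₁ : b₁ ≠ 0)
    (β α : ℝ → Fin 3 → ℝ) (a b : ℝ → ℝ) (X : ℝ → ℝ → Fin 3 → ℝ)
    (hβ : β = fun s => ![Real.cos s, Real.sin s, 0])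
    (ha : a = fun s => c₁ * Real.cos s)
    (hb : b = fun s => b₁ * s + b₀)
    (hα : ∀ s, α s = a s • deriv β s + b s • crossProduct (β s) (deriv β s))
    (hX : ∀ s t, X s t = α s + t • β s) :
    ∀ s t : ℝ,
      (Matrix.of ![deriv (fun u => X u t) s, deriv (fun u => X s u) t,
          deriv (deriv (fun u => X u t)) s]).det = b₁ * (deriv (deriv a) s - a s)
      ∧ (deriv (fun u => X s u) t ⬝ᵥ deriv (fun u => X s u) t)
          * (Matrix.of ![deriv (fun u => X u t) s, deriv (fun u => X s u) t,
              deriv (deriv (fun u => X u t)) s]).det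
        - 2 * (deriv (fun u => X u t) s ⬝ᵥ deriv (fun u => X s u) t)
          * (Matrix.of ![deriv (fun u => X u t) s, deriv (fun u => X s u) t,
              deriv (fun u => deriv (fun v => X v u) s) t]).det
        + (deriv (fun u => X u t) s ⬝ᵥ deriv (fun u => X u t) s)
          * (Matrix.of ![deriv (fun u => X u t) s, deriv (fun u => X s u) t,
              deriv (deriv (fun u => X s u)) t]).det = 0 := by
  have hdβ : ∀ u, HasDerivAt β ![-Real.sin u, Real.cos u, (0:ℝ)] u := by
    intro u
    rw [hasDerivAt_pi]
    intro i
    fin_cases i <;> simp [hβ]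
    · exact Real.hasDerivAt_cos u
    · exact Real.hasDerivAt_sin u
    · exact hasDerivAt_const u 0
  have hβval : ∀ u, deriv β u = ![-Real.sin u, Real.cos u, (0:ℝ)] :=
    fun u => (hdβ u).deriv
  have hXc : ∀ u v, X u v = ![-(c₁ * Real.cos u) * Real.sin u + v * Real.cos u,
      c₁ * (Real.cos u * Real.cos u) + v * Real.sin u, b₁ * u + b₀] := by
    intro u v
    rw [hX, hα, hβval, hβ, ha, hb]
    funext i
    fin_cases i
    · simp [cross_apply]; try ring
    · simp [cross_apply]; try ring
    · simp [cross_apply]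
      linear_combination (b₁ * u + b₀) * Real.sin_sq_add_cos_sq u
  have hXs : ∀ u v, HasDerivAt (fun x => X x v)
      ![-c₁ * (Real.cos u * Real.cos u - Real.sin u * Real.sin u) - v * Real.sin u,
        -2 * c₁ * (Real.sin u * Real.cos u) + v * Real.cos u, b₁] u := by
    intro u v
    rw [show (fun x => X x v) = fun x => ![-(c₁ * Real.cos x) * Real.sin x + v * Real.cos x,
        c₁ * (Real.cos x * Real.cos x) + v * Real.sin x, b₁ * x + b₀] from
      funext fun x => hXc x v]
    rw [hasDerivAt_pi]
    intro i
    fin_cases i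
    · have h := (((Real.hasDerivAt_cos u).const_mul c₁).neg.mul (Real.hasDerivAt_sin u)).add
        ((Real.hasDerivAt_cos u).const_mul v)
      show HasDerivAt (fun x => -(c₁ * Real.cos x) * Real.sin x + v * Real.cos x)
        (-c₁ * (Real.cos u * Real.cos u - Real.sin u * Real.sin u) - v * Real.sin u) u
      exact h.congr_deriv (by simp only [Pi.neg_apply]; ring)
    · have h := (((Real.hasDerivAt_cos u).mul (Real.hasDerivAt_cos u)).const_mul c₁).add
        ((Real.hasDerivAt_sin u).const_mul v)
      show HasDerivAt (fun x => c₁ * (Real.cos x * Real.cos x) + v * Real.sin x)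
        (-2 * c₁ * (Real.sin u * Real.cos u) + v * Real.cos u) u
      exact h.congr_deriv (by ring)
    · have h := ((hasDerivAt_id' u).const_mul b₁).add_const b₀
      show HasDerivAt (fun x => b₁ * x + b₀) b₁ u
      exact h.congr_deriv (by ring)
  have hXsval : ∀ v, deriv (fun x => X x v) = fun u =>
      ![-c₁ * (Real.cos u * Real.cos u - Real.sin u * Real.sin u) - v * Real.sin u,
        -2 * c₁ * (Real.sin u * Real.cos u) + v * Real.cos u, b₁] := by
    intro v; funext u; exact (hXs u v).deriv
  have hXss : ∀ u v, HasDerivAt (deriv (fun x => X x v))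
      ![4 * c₁ * (Real.sin u * Real.cos u) - v * Real.cos u,
        -2 * c₁ * (Real.cos u * Real.cos u - Real.sin u * Real.sin u) - v * Real.sin u,
        (0:ℝ)] u := by
    intro u v
    rw [hXsval v, hasDerivAt_pi]
    intro i
    fin_cases i
    · have h := ((((Real.hasDerivAt_cos u).mul (Real.hasDerivAt_cos u)).sub
        ((Real.hasDerivAt_sin u).mul (Real.hasDerivAt_sin u))).const_mul (-c₁)).sub
        ((Real.hasDerivAt_sin u).const_mul v)
      show HasDerivAt
        (fun x => -c₁ * (Real.cos x * Real.cos x - Real.sin x * Real.sin x) - v * Real.sin x)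
        (4 * c₁ * (Real.sin u * Real.cos u) - v * Real.cos u) u
      exact h.congr_deriv (by ring)
    · have h := (((Real.hasDerivAt_sin u).mul (Real.hasDerivAt_cos u)).const_mul (-2 * c₁)).add
        ((Real.hasDerivAt_cos u).const_mul v)
      show HasDerivAt (fun x => -2 * c₁ * (Real.sin x * Real.cos x) + v * Real.cos x)
        (-2 * c₁ * (Real.cos u * Real.cos u - Real.sin u * Real.sin u) - v * Real.sin u) u
      exact h.congr_deriv (by ring)
    · show HasDerivAt (fun _ => b₁) (0:ℝ) u
      exact hasDerivAt_const u b₁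
  have hXt : ∀ u v, HasDerivAt (fun x => X u x) ![Real.cos u, Real.sin u, (0:ℝ)] v := by
    intro u v
    rw [show (fun x => X u x) = fun x => ![-(c₁ * Real.cos u) * Real.sin u + x * Real.cos u,
        c₁ * (Real.cos u * Real.cos u) + x * Real.sin u, b₁ * u + b₀] from
      funext fun x => hXc u x]
    rw [hasDerivAt_pi]
    intro i
    fin_cases i
    · have h := ((hasDerivAt_id' v).mul_const (Real.cos u)).const_add
        (-(c₁ * Real.cos u) * Real.sin u)
      show HasDerivAt (fun x => -(c₁ * Real.cos u) * Real.sin u + x * Real.cos u)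
        (Real.cos u) v
      exact h.congr_deriv (by ring)
    · have h := ((hasDerivAt_id' v).mul_const (Real.sin u)).const_add
        (c₁ * (Real.cos u * Real.cos u))
      show HasDerivAt (fun x => c₁ * (Real.cos u * Real.cos u) + x * Real.sin u)
        (Real.sin u) v
      exact h.congr_deriv (by ring)
    · show HasDerivAt (fun _ => b₁ * u + b₀) (0:ℝ) v
      exact hasDerivAt_const v _
  have hXtval : ∀ u, deriv (fun x => X u x) = fun _ => ![Real.cos u, Real.sin u, (0:ℝ)] := by
    intro u; funext v; exact (hXt u v).deriv
  have hXst : ∀ u v, HasDerivAt (fun x => deriv (fun y => X y x) u)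
      ![-Real.sin u, Real.cos u, (0:ℝ)] v := by
    intro u v
    rw [show (fun x => deriv (fun y => X y x) u) = fun x =>
        ![-c₁ * (Real.cos u * Real.cos u - Real.sin u * Real.sin u) - x * Real.sin u,
          -2 * c₁ * (Real.sin u * Real.cos u) + x * Real.cos u, b₁] from
      funext fun x => by rw [hXsval x]]
    rw [hasDerivAt_pi]
    intro i
    fin_cases i
    · have h := ((hasDerivAt_id' v).mul_const (Real.sin u)).const_sub
        (-c₁ * (Real.cos u * Real.cos u - Real.sin u * Real.sin u))
      show HasDerivAt (fun x =>
          -c₁ * (Real.cos u * Real.cos u - Real.sin u * Real.sin u) - x * Real.sin u)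
        (-Real.sin u) v
      exact h.congr_deriv (by ring)
    · have h := ((hasDerivAt_id' v).mul_const (Real.cos u)).const_add
        (-2 * c₁ * (Real.sin u * Real.cos u))
      show HasDerivAt (fun x => -2 * c₁ * (Real.sin u * Real.cos u) + x * Real.cos u)
        (Real.cos u) v
      exact h.congr_deriv (by ring)
    · show HasDerivAt (fun _ => b₁) (0:ℝ) v
      exact hasDerivAt_const v _
  have hda : deriv a = fun u => -c₁ * Real.sin u := by
    funext u
    rw [ha]
    have h2 : HasDerivAt (fun x => c₁ * Real.cos x) (c₁ * -Real.sin u) u :=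
      (Real.hasDerivAt_cos u).const_mul c₁
    rw [h2.deriv]; ring
  have hdda : ∀ u, deriv (deriv a) u = -c₁ * Real.cos u := by
    intro u
    rw [hda]
    have h2 : HasDerivAt (fun x => -c₁ * Real.sin x) (-c₁ * Real.cos u) u :=
      (Real.hasDerivAt_sin u).const_mul (-c₁)
    rw [h2.deriv]
  intro s t
  rw [hdda s, ha]
  rw [(hXs s t).deriv, (hXss s t).deriv, (hXst s t).deriv, hXtval s]
  have hz : deriv (fun _ : ℝ => ![Real.cos s, Real.sin s, (0:ℝ)]) t
      = ![(0:ℝ), 0, 0] := by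
    rw [deriv_const]
    funext i; fin_cases i <;> simp
  rw [hz]
  constructor
  · simp [Matrix.det_fin_three, Matrix.vecHead, Matrix.vecTail]
    linear_combination (-2 * b₁ * c₁ * Real.cos s) * Real.sin_sq_add_cos_sq s
  · simp [Matrix.det_fin_three, dotProduct, Fin.sum_univ_three,
      Matrix.vecHead, Matrix.vecTail]
    ring
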